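/- arXiv:2206.14840 — 5 statements merged into one kernel-verified Lean document; each statement's English description precedes it below -/
import Mathlib

section
/- Let S be a commutative ternary semigroup. Then the operation on S × S defined by ((a₁,b₁),(a₂,b₂)) ↦ (μ(a₁,b₁,a₂), b₂) is associative, so S × S becomes a binary semigroup. -/
/-- The binary "hetero power" product on pairs: `(a₁,b₁) • (a₂,b₂) = (μ(a₁,b₁,a₂), b₂)`. -/
def hop {S : Type*} (μ : S → S → S → S) (p q : S × S) : S × S :=
  (μ p.1 p.2 q.1, q.2)

/-- For a commutative (totally associative) ternary semigroup `S`, the binary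
operation `(a₁,b₁) • (a₂,b₂) = (μ(a₁,b₁,a₂), b₂)` on `S × S` is associative. -/
theorem hetero_square_binary_assoc {S : Type*} (μ : S → S → S → S)
    (hassoc : ∀ a b c d e : S,
      μ (μ a b c) d e = μ a (μ b c d) e ∧ μ a (μ b c d) e = μ a b (μ c d e))
    (hcomm : ∀ a b c : S, μ a b c = μ b a c ∧ μ a b c = μ a c b) :
    ∀ p q r : S × S, hop μ (hop μ p q) r = hop μ p (hop μ q r) := by
  intro p q r
  simp only [hop]
  refine Prod.ext ?_ rfl
  exact ((hassoc p.1 p.2 q.1 q.2 r.1).1).trans (hassoc p.1 p.2 q.1 q.2 r.1).2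
end

section
/- Let S be a commutative 5-ary semigroup. Then the ternary operation on S × S defined by μ'((a₁,b₁),(a₂,b₂),(a₃,b₃)) = (μ(a₁,b₂,a₃,b₁,a₂), b₃) is totally associative, so S × S becomes a ternary semigroup. -/
/-- The ternary hetero power product (with one intact element) on pairs built
from a 5-ary operation: `μ'((a₁,b₁),(a₂,b₂),(a₃,b₃)) = (μ(a₁,b₂,a₃,b₁,a₂), b₃)`. -/
def op3of5 {S : Type*} (μ : S → S → S → S → S → S) (p q r : S × S) : S × S :=
  (μ p.1 q.2 r.1 p.2 q.1, r.2)

/-- For a commutative 5-ary semigroup `S`, the ternary hetero power product on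
`S × S` with one intact element is totally associative. -/
theorem hetero_power_5ary_to_ternary {S : Type*} (μ : S → S → S → S → S → S)
    (hassoc : ∀ x1 x2 x3 x4 x5 x6 x7 x8 x9 : S,
      μ (μ x1 x2 x3 x4 x5) x6 x7 x8 x9 = μ x1 (μ x2 x3 x4 x5 x6) x7 x8 x9 ∧
      μ x1 (μ x2 x3 x4 x5 x6) x7 x8 x9 = μ x1 x2 (μ x3 x4 x5 x6 x7) x8 x9 ∧
      μ x1 x2 (μ x3 x4 x5 x6 x7) x8 x9 = μ x1 x2 x3 (μ x4 x5 x6 x7 x8) x9 ∧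
      μ x1 x2 x3 (μ x4 x5 x6 x7 x8) x9 = μ x1 x2 x3 x4 (μ x5 x6 x7 x8 x9))
    (hcomm : ∀ a b c d e : S,
      μ a b c d e = μ b a c d e ∧ μ a b c d e = μ a c b d e ∧
      μ a b c d e = μ a b d c e ∧ μ a b c d e = μ a b c e d) :
    ∀ p q r s t : S × S,
      op3of5 μ (op3of5 μ p q r) s t = op3of5 μ p (op3of5 μ q r s) t ∧
      op3of5 μ p (op3of5 μ q r s) t = op3of5 μ p q (op3of5 μ r s t) := by
  rintro ⟨a, b⟩ ⟨c, d⟩ ⟨e, f⟩ ⟨g, h⟩ ⟨i, j⟩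
  set M : S → S → S → S → S → S → S → S → S → S :=
    fun x1 x2 x3 x4 x5 x6 x7 x8 x9 => μ (μ x1 x2 x3 x4 x5) x6 x7 x8 x9 with hM
  have h12 : ∀ x1 x2 x3 x4 x5 x6 x7 x8 x9 : S,
      M x1 x2 x3 x4 x5 x6 x7 x8 x9 = M x2 x1 x3 x4 x5 x6 x7 x8 x9 := by
    intro x1 x2 x3 x4 x5 x6 x7 x8 x9
    simp only [hM]; rw [(hcomm x1 x2 x3 x4 x5).1]
  have h23 : ∀ x1 x2 x3 x4 x5 x6 x7 x8 x9 : S,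
      M x1 x2 x3 x4 x5 x6 x7 x8 x9 = M x1 x3 x2 x4 x5 x6 x7 x8 x9 := by
    intro x1 x2 x3 x4 x5 x6 x7 x8 x9
    simp only [hM]; rw [(hcomm x1 x2 x3 x4 x5).2.1]
  have h34 : ∀ x1 x2 x3 x4 x5 x6 x7 x8 x9 : S,
      M x1 x2 x3 x4 x5 x6 x7 x8 x9 = M x1 x2 x4 x3 x5 x6 x7 x8 x9 := by
    intro x1 x2 x3 x4 x5 x6 x7 x8 x9
    simp only [hM]; rw [(hcomm x1 x2 x3 x4 x5).2.2.1]
  have h45 : ∀ x1 x2 x3 x4 x5 x6 x7 x8 x9 : S,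
      M x1 x2 x3 x4 x5 x6 x7 x8 x9 = M x1 x2 x3 x5 x4 x6 x7 x8 x9 := by
    intro x1 x2 x3 x4 x5 x6 x7 x8 x9
    simp only [hM]; rw [(hcomm x1 x2 x3 x4 x5).2.2.2]
  have h56 : ∀ x1 x2 x3 x4 x5 x6 x7 x8 x9 : S,
      M x1 x2 x3 x4 x5 x6 x7 x8 x9 = M x1 x2 x3 x4 x6 x5 x7 x8 x9 := by
    intro x1 x2 x3 x4 x5 x6 x7 x8 x9
    simp only [hM]
    rw [(hassoc x1 x2 x3 x4 x5 x6 x7 x8 x9).1, (hcomm x2 x3 x4 x5 x6).2.2.2,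
      ← (hassoc x1 x2 x3 x4 x6 x5 x7 x8 x9).1]
  have h67 : ∀ x1 x2 x3 x4 x5 x6 x7 x8 x9 : S,
      M x1 x2 x3 x4 x5 x6 x7 x8 x9 = M x1 x2 x3 x4 x5 x7 x6 x8 x9 := by
    intro x1 x2 x3 x4 x5 x6 x7 x8 x9
    simp only [hM]; rw [(hcomm (μ x1 x2 x3 x4 x5) x6 x7 x8 x9).2.1]
  have h78 : ∀ x1 x2 x3 x4 x5 x6 x7 x8 x9 : S,
      M x1 x2 x3 x4 x5 x6 x7 x8 x9 = M x1 x2 x3 x4 x5 x6 x8 x7 x9 := by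
    intro x1 x2 x3 x4 x5 x6 x7 x8 x9
    simp only [hM]; rw [(hcomm (μ x1 x2 x3 x4 x5) x6 x7 x8 x9).2.2.1]
  have h89 : ∀ x1 x2 x3 x4 x5 x6 x7 x8 x9 : S,
      M x1 x2 x3 x4 x5 x6 x7 x8 x9 = M x1 x2 x3 x4 x5 x6 x7 x9 x8 := by
    intro x1 x2 x3 x4 x5 x6 x7 x8 x9
    simp only [hM]; rw [(hcomm (μ x1 x2 x3 x4 x5) x6 x7 x8 x9).2.2.2]
  have e1 : M a d e b c h i f g = M a h i b c f g d e := by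
    rw [h56 a d e b c h i f g]
    rw [h45 a d e b h c i f g]
    rw [h34 a d e h b c i f g]
    rw [h23 a d h e b c i f g]
    rw [h67 a h d e b c i f g]
    rw [h56 a h d e b i c f g]
    rw [h45 a h d e i b c f g]
    rw [h34 a h d i e b c f g]
    rw [h56 a h i d e b c f g]
    rw [h45 a h i d b e c f g]
    rw [h67 a h i b d e c f g]
    rw [h56 a h i b d c e f g]
    rw [h78 a h i b c d e f g]
    rw [h67 a h i b c d f e g]
    rw [h89 a h i b c f d e g]
    rw [h78 a h i b c f d g e]
  have e2 : M a h i b c f g d e = M a d e h i f g b c := by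
    rw [h78 a h i b c f g d e]
    rw [h67 a h i b c f d g e]
    rw [h56 a h i b c d f g e]
    rw [h45 a h i b d c f g e]
    rw [h34 a h i d b c f g e]
    rw [h23 a h d i b c f g e]
    rw [h89 a d h i b c f g e]
    rw [h78 a d h i b c f e g]
    rw [h67 a d h i b c e f g]
    rw [h56 a d h i b e c f g]
    rw [h45 a d h i e b c f g]
    rw [h34 a d h e i b c f g]
    rw [h78 a d e h i b c f g]
    rw [h67 a d e h i b f c g]
    rw [h89 a d e h i f b c g]
    rw [h78 a d e h i f b g c]
  have mid : μ a h i b (μ c f g d e) = M a h i b c f g d e := by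
    simp only [hM]
    rw [(hassoc a h i b c f g d e).1, (hassoc a h i b c f g d e).2.1,
      (hassoc a h i b c f g d e).2.2.1, (hassoc a h i b c f g d e).2.2.2]
  have rhs : μ a d (μ e h i f g) b c = M a d e h i f g b c := by
    simp only [hM]
    rw [(hassoc a d e h i f g b c).1, (hassoc a d e h i f g b c).2.1]
  constructor <;> simp only [op3of5] <;> refine Prod.ext ?_ rfl <;> simp only []
  · show M a d e b c h i f g = μ a h i b (μ c f g d e)
    rw [mid]; exact e1
  · show μ a h i b (μ c f g d e) = μ a d (μ e h i f g) b c
    rw [mid, rhs]; exact e2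
end

section
/- Let S be a commutative m-ary semigroup. The polyadic gauge relation ((a₁,b₁) ∼ (a₂,b₂) iff ∃x,y ∈ S with μ(a₁^{m−1},x) = μ(a₂^{m−1},y) and μ(b₁^{m−1},x) = μ(b₂^{m−1},y)) coincides with the polyadic twisted relation ((a₁,b₁) ∼ (a₂,b₂) iff ∃z with μ∘²(a₁^{m−1},b₂^{m−1},z) = μ∘²(a₂^{m−1},b₁^{m−1},z)), provided m ≥ 2 and S is nonempty (so that suitable elements t₁,...,t_{m−2} exist). -/
/-- The `m`-tuple `(a, …, a, x)` (the element `a` repeated `m-1` times, then `x`). -/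
def repv {S : Type*} (m : ℕ) (a x : S) : Fin m → S :=
  fun i => if i.val < m - 1 then a else x

/-- The iterated product `μ∘²` on a polyad of `2m-1` elements `g 0, …, g (2m-2)`,
with the inner multiplication placed at position `k`. -/
def place {S : Type*} (m : ℕ) (μ : (Fin m → S) → S) (k : ℕ) (g : ℕ → S) : S :=
  μ (fun i => if i.val < k then g i.val
      else if i.val = k then μ (fun j => g (k + j.val))
      else g (i.val + m - 1))

/-- Total associativity of an `m`-ary operation: all placements of the inner
multiplication in the twice-iterated product agree. -/
def TotAssoc {S : Type*} (m : ℕ) (μ : (Fin m → S) → S) : Prop :=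
  ∀ (g : ℕ → S) (k l : ℕ), k < m → l < m → place m μ k g = place m μ l g

/-- Full commutativity of an `m`-ary operation: invariance under all
permutations of the arguments. -/
def CommOp {S : Type*} (m : ℕ) (μ : (Fin m → S) → S) : Prop :=
  ∀ (g : Fin m → S) (σ : Equiv.Perm (Fin m)), μ (g ∘ σ) = μ g

/-- The twisted shift `μ∘²(a^{m-1}, b^{m-1}, z)`, computed as
`μ(a^{m-1}, μ(b^{m-1}, z))`. -/
def twist {S : Type*} (m : ℕ) (μ : (Fin m → S) → S) (a b z : S) : S :=
  μ (repv m a (μ (repv m b z)))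

/-- The m-tuple `(x, w, t, t, …, t)`. -/
def qfun {S : Type*} (m : ℕ) (x w t : S) : Fin m → S :=
  fun i => if i.val = 0 then x else if i.val = 1 then w else t

/-- `μ(w, b, …, b) = μ(b, …, b, w)`. -/
lemma mu_zb {S : Type*} {m : ℕ} (hm : 2 ≤ m) (μ : (Fin m → S) → S) (hcomm : CommOp m μ)
    (b w : S) :
    μ (fun j : Fin m => if j.val = 0 then w else b) = μ (repv m b w) := by
  have h := hcomm (repv m b w) (Equiv.swap ⟨0, by omega⟩ ⟨m - 1, by omega⟩)
  rw [← h]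
  congr 1
  funext j
  simp only [Function.comp_apply, Equiv.swap_apply_def, repv, Fin.ext_iff,
    apply_ite (Fin.val)]
  split_ifs <;> first | rfl | omega | contradiction

/-- `μ(x, w, t, …) = μ(w, x, t, …)`. -/
lemma qfun_comm {S : Type*} {m : ℕ} (hm : 2 ≤ m) (μ : (Fin m → S) → S) (hcomm : CommOp m μ)
    (x w t : S) :
    μ (qfun m x w t) = μ (qfun m w x t) := by
  have h := hcomm (qfun m w x t) (Equiv.swap ⟨0, by omega⟩ ⟨1, by omega⟩)
  rw [← h]
  congr 1
  funext j
  simp only [Function.comp_apply, Equiv.swap_apply_def, qfun, Fin.ext_iff,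
    apply_ite (Fin.val)]
  split_ifs <;> first | rfl | omega | contradiction

/-- Key associativity instance: `μ(μ(a^{m-1},x), w, t^{m-2}) = μ(a^{m-1}, μ(x, w, t^{m-2}))`. -/
lemma key {S : Type*} {m : ℕ} (hm : 2 ≤ m) (μ : (Fin m → S) → S)
    (hassoc : TotAssoc m μ) (a x w t : S) :
    μ (qfun m (μ (repv m a x)) w t) = μ (repv m a (μ (qfun m x w t))) := by
  set h : ℕ → S := fun n =>
    if n < m - 1 then a else if n = m - 1 then x else if n = m then w else t with hdef
  have H := hassoc h 0 (m - 1) (by omega) (by omega)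
  have H0 : place m μ 0 h = μ (qfun m (μ (repv m a x)) w t) := by
    unfold place
    congr 1
    funext i
    have hi := i.isLt
    rcases eq_or_ne i.val 0 with h0 | h0
    · simp only [h0, if_neg (by omega : ¬ (0:ℕ) < 0), if_pos rfl, qfun, if_pos rfl]
      refine congrArg μ (funext fun j => ?_)
      have hj := j.isLt
      simp only [hdef, repv]
      all_goals split_ifs <;> first | rfl | omega | contradiction
    · simp only [if_neg (by omega : ¬ i.val < 0), if_neg h0, hdef, qfun]
      all_goals split_ifs <;> first | rfl | omega | contradiction
  have H1 : place m μ (m - 1) h = μ (repv m a (μ (qfun m x w t))) := by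
    unfold place
    congr 1
    funext i
    have hi := i.isLt
    rcases Nat.lt_or_ge i.val (m - 1) with h0 | h0
    · simp only [if_pos h0, repv, hdef]
      all_goals split_ifs <;> first | rfl | omega | contradiction
    · have h1 : i.val = m - 1 := by omega
      simp only [if_neg (by omega : ¬ i.val < m - 1), if_pos h1, repv,
        if_neg (by omega : ¬ i.val < m - 1)]
      refine congrArg μ (funext fun j => ?_)
      have hj := j.isLt
      simp only [hdef, qfun]
      all_goals split_ifs <;> first | rfl | omega | contradiction
  rw [← H0, ← H1, H]

/-- Commutation of translations: `μ(a^{m-1}, μ(b^{m-1}, z)) = μ(b^{m-1}, μ(a^{m-1}, z))`. -/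
lemma commL {S : Type*} {m : ℕ} (hm : 2 ≤ m) (μ : (Fin m → S) → S)
    (hassoc : TotAssoc m μ) (hcomm : CommOp m μ) (a b z : S) :
    μ (repv m a (μ (repv m b z))) = μ (repv m b (μ (repv m a z))) := by
  set g : ℕ → S := fun n =>
    if n < m - 1 then a else if n = m - 1 then z else b with gdef
  have H := hassoc g (m - 1) 0 (by omega) (by omega)
  have H1 : place m μ (m - 1) g = μ (repv m a (μ (repv m b z))) := by
    unfold place
    congr 1
    funext i
    have hi := i.isLt
    rcases Nat.lt_or_ge i.val (m - 1) with h0 | h0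
    · simp only [if_pos h0, repv, gdef]
      all_goals split_ifs <;> first | rfl | omega | contradiction
    · have h1 : i.val = m - 1 := by omega
      simp only [if_neg (by omega : ¬ i.val < m - 1), if_pos h1, repv,
        if_neg (by omega : ¬ i.val < m - 1)]
      rw [← mu_zb hm μ hcomm b z]
      refine congrArg μ (funext fun j => ?_)
      have hj := j.isLt
      simp only [gdef]
      all_goals split_ifs <;> first | rfl | omega | contradiction
  have H0 : place m μ 0 g = μ (repv m b (μ (repv m a z))) := by
    unfold place
    rw [← mu_zb hm μ hcomm b (μ (repv m a z))]
    congr 1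
    funext i
    have hi := i.isLt
    rcases eq_or_ne i.val 0 with h0 | h0
    · simp only [h0, if_neg (by omega : ¬ (0:ℕ) < 0), if_pos rfl, if_pos rfl]
      refine congrArg μ (funext fun j => ?_)
      have hj := j.isLt
      simp only [gdef, repv]
      all_goals split_ifs <;> first | rfl | omega | contradiction
    · simp only [if_neg (by omega : ¬ i.val < 0), if_neg h0, if_neg h0, gdef]
      all_goals split_ifs <;> first | rfl | omega | contradiction
  rw [← H1, ← H0, H]

/-- For a nonempty commutative `m`-ary semigroup `S` with `m ≥ 2`, the polyadic
gauge relation coincides with the polyadic twisted relation on `S × S`. -/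
theorem mary_gauge_iff_twist {S : Type*} [Nonempty S] (m : ℕ) (hm : 2 ≤ m)
    (μ : (Fin m → S) → S) (hassoc : TotAssoc m μ) (hcomm : CommOp m μ)
    (a₁ b₁ a₂ b₂ : S) :
    (∃ x y : S, μ (repv m a₁ x) = μ (repv m a₂ y) ∧ μ (repv m b₁ x) = μ (repv m b₂ y))
      ↔ ∃ z : S, twist m μ a₁ b₂ z = twist m μ a₂ b₁ z := by
  constructor
  · rintro ⟨x, y, h1, h2⟩
    obtain ⟨t⟩ := (inferInstance : Nonempty S)
    refine ⟨μ (qfun m x y t), ?_⟩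
    have E : ∀ a b u v : S,
        μ (repv m a (μ (repv m b (μ (qfun m u v t)))))
          = μ (qfun m (μ (repv m a u)) (μ (repv m b v)) t) := by
      intro a b u v
      rw [qfun_comm hm μ hcomm u v, ← key hm μ hassoc b v u,
        qfun_comm hm μ hcomm (μ (repv m b v)) u, ← key hm μ hassoc a u (μ (repv m b v))]
    show μ (repv m a₁ (μ (repv m b₂ (μ (qfun m x y t)))))
        = μ (repv m a₂ (μ (repv m b₁ (μ (qfun m x y t)))))
    rw [E a₁ b₂ x y, h1, ← h2]
    have := E a₂ b₁ y x
    rw [qfun_comm hm μ hcomm y x] at this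
    exact this.symm
  · rintro ⟨z, hz⟩
    exact ⟨μ (repv m b₂ z), μ (repv m b₁ z), hz, commL hm μ hassoc hcomm b₁ b₂ z⟩
end

section
/- In a commutative m-ary semigroup S, equip the quotient of S × S (by the twisted equivalence relation) with the componentwise m-ary product. Then the class of (μ(a,b^{m−1}), μ(a^{m−1},b)) is a querelement of the class of (a,b): the m-ary product of m−1 copies of [(a,b)] with this class equals [(a,b)]. -/
section Aux
variable {S : Type*}

def natPerm (m p q : ℕ) (hp : p < m) (hq : q < m) : Equiv.Perm (Fin m) :=
  Equiv.swap ⟨p, hp⟩ ⟨q, hq⟩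

lemma natPerm_val {m p q : ℕ} (hp : p < m) (hq : q < m) (i : Fin m) :
    ((natPerm m p q hp hq) i).val =
      if i.val = p then q else if i.val = q then p else i.val := by
  simp only [natPerm, Equiv.swap_apply_def, apply_ite (Fin.val), Fin.ext_iff]

lemma comm_eq {m : ℕ} {μ : (Fin m → S) → S} (hcomm : CommOp m μ)
    (f h : Fin m → S) (σ : Equiv.Perm (Fin m)) (he : ∀ i, h i = f (σ i)) :
    μ h = μ f := by
  have : h = f ∘ σ := funext he
  rw [this]; exact hcomm f σ

def Lop (m : ℕ) (μ : (Fin m → S) → S) (u t : S) : S := μ (repv m u t)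

def mixf (m : ℕ) (s v r : S) (k : ℕ) : Fin m → S :=
  fun i => if i.val < k then s else if i.val < m - 1 then v else r

lemma P1 {m : ℕ} {μ : (Fin m → S) → S} (hm : 2 ≤ m)
    (hassoc : TotAssoc m μ) (hcomm : CommOp m μ) (u v w : S) :
    Lop m μ u (Lop m μ v w) = Lop m μ v (Lop m μ u w) := by
  classical
  set g : ℕ → S := fun i => if i < m - 1 then u else if i = m - 1 then w else v with hg
  have h := hassoc g (m - 1) 0 (by omega) (by omega)
  have hin1 : μ (fun j : Fin m => g (m - 1 + j.val)) = Lop m μ v w := by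
    refine (comm_eq hcomm _ _ (natPerm m 0 (m-1) (by omega) (by omega)) ?_).symm
    intro j
    have hv := natPerm_val (m := m) (p := 0) (q := m-1) (by omega) (by omega) j
    simp only [Lop, repv, hg, hv]
    rcases j with ⟨j, hj⟩
    simp only []
    split_ifs <;> first | rfl | (exfalso; omega)
  have e1 : place m μ (m - 1) g = Lop m μ u (Lop m μ v w) := by
    unfold place
    rw [hin1]
    congr 1
    funext i
    rcases i with ⟨i, hi⟩
    simp only [Lop, repv, hg]
    split_ifs <;> first | rfl | (exfalso; omega)
  have hin2 : μ (fun j : Fin m => g (0 + j.val)) = Lop m μ u w := by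
    congr 1
    funext j
    rcases j with ⟨j, hj⟩
    simp only [Lop, repv, hg]
    split_ifs <;> first | rfl | (exfalso; omega)
  have e2 : place m μ 0 g = Lop m μ v (Lop m μ u w) := by
    unfold place
    rw [hin2]
    refine comm_eq hcomm _ _ (natPerm m 0 (m-1) (by omega) (by omega)) ?_
    intro i
    have hv := natPerm_val (m := m) (p := 0) (q := m-1) (by omega) (by omega) i
    simp only [Lop, repv, hg, hv]
    rcases i with ⟨i, hi⟩
    simp only []
    split_ifs <;> first | rfl | (exfalso; omega)
  rw [e1, e2] at h
  exact h

set_option maxHeartbeats 2000000 in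
lemma stepL {m : ℕ} {μ : (Fin m → S) → S} (hm : 2 ≤ m)
    (hassoc : TotAssoc m μ) (hcomm : CommOp m μ) (u v r : S) (k : ℕ) (hk : k ≤ m - 2) :
    μ (mixf m (μ (repv m u v)) v r (k+1)) =
      μ (mixf m (μ (repv m u v)) v (Lop m μ u r) k) := by
  classical
  set g : ℕ → S := fun i => if i < k then μ (repv m u v) else if i < m - 2 then v
      else if i = m - 2 then r else if i < 2*m - 2 then u else v with hg
  have h := hassoc g (m - 1) (m - 2) (by omega) (by omega)
  have hin1 : μ (fun j : Fin m => g (m - 1 + j.val)) = μ (repv m u v) := by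
    congr 1
    funext j
    rcases j with ⟨j, hj⟩
    simp only [repv, hg]
    split_ifs <;> first | rfl | (exfalso; omega)
  have hin2 : μ (fun j : Fin m => g (m - 2 + j.val)) = Lop m μ u r := by
    refine (comm_eq hcomm _ _ (natPerm m 0 (m-1) (by omega) (by omega)) ?_).symm
    intro j
    have hv := natPerm_val (m := m) (p := 0) (q := m-1) (by omega) (by omega) j
    simp only [Lop, repv, hg, hv]
    rcases j with ⟨j, hj⟩
    simp only []
    split_ifs <;> first | rfl | (exfalso; omega)
  have e1 : place m μ (m - 1) g = μ (mixf m (μ (repv m u v)) v r (k+1)) := by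
    unfold place
    rw [hin1]
    refine ((comm_eq hcomm
        (fun i : Fin m => if i.val < k then μ (repv m u v) else if i.val < m - 2 then v
          else if i.val = m - 2 then μ (repv m u v) else r)
        (mixf m (μ (repv m u v)) v r (k+1))
        (natPerm m k (m-2) (by omega) (by omega)) ?_).trans
      (comm_eq hcomm _ _ (natPerm m (m-2) (m-1) (by omega) (by omega)) ?_)).symm
    · intro i
      have hv := natPerm_val (m := m) (p := k) (q := m-2) (by omega) (by omega) i
      simp only [mixf, hg, hv]
      rcases i with ⟨i, hi⟩
      simp only []
      split_ifs <;> first | rfl | (exfalso; omega)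
    · intro i
      have hv := natPerm_val (m := m) (p := m-2) (q := m-1) (by omega) (by omega) i
      simp only [mixf, hg, hv]
      rcases i with ⟨i, hi⟩
      simp only []
      split_ifs <;> first | rfl | (exfalso; omega)
  have e2 : place m μ (m - 2) g = μ (mixf m (μ (repv m u v)) v (Lop m μ u r) k) := by
    unfold place
    rw [hin2]
    refine (comm_eq hcomm _ _ (natPerm m (m-2) (m-1) (by omega) (by omega)) ?_).symm
    intro i
    have hv := natPerm_val (m := m) (p := m-2) (q := m-1) (by omega) (by omega) i
    simp only [mixf, hg, hv]
    rcases i with ⟨i, hi⟩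
    simp only []
    split_ifs <;> first | rfl | (exfalso; omega)
  rw [e1, e2] at h
  exact h

lemma P2 {m : ℕ} {μ : (Fin m → S) → S} (hm : 2 ≤ m)
    (hassoc : TotAssoc m μ) (hcomm : CommOp m μ) (u v t : S) :
    Lop m μ (Lop m μ u v) t = Lop m μ v ((Lop m μ u)^[m-1] t) := by
  have aux : ∀ j, j ≤ m - 1 →
      μ (mixf m (μ (repv m u v)) v t (m-1)) =
        μ (mixf m (μ (repv m u v)) v ((Lop m μ u)^[j] t) (m-1-j)) := by
    intro j
    induction j with
    | zero => intro _; simp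
    | succ n ih =>
      intro hn
      rw [ih (by omega)]
      have hk : m - 1 - n = (m - 1 - (n+1)) + 1 := by omega
      rw [hk, stepL hm hassoc hcomm u v _ _ (by omega), Function.iterate_succ_apply']
  have h := aux (m-1) le_rfl
  have l1 : mixf m (μ (repv m u v)) v t (m-1) = repv m (μ (repv m u v)) t := by
    funext i
    rcases i with ⟨i, hi⟩
    simp only [mixf, repv]
    split_ifs <;> first | rfl | (exfalso; omega)
  have l2 : mixf m (μ (repv m u v)) v ((Lop m μ u)^[m-1] t) (m-1-(m-1)) =
      repv m v ((Lop m μ u)^[m-1] t) := by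
    funext i
    rcases i with ⟨i, hi⟩
    simp only [mixf, repv]
    split_ifs <;> first | rfl | (exfalso; omega)
  rw [l1, l2] at h
  exact h

end Aux

/-- In a commutative `m`-ary semigroup the class of
`(μ(a, b^{m-1}), μ(a^{m-1}, b))` is a querelement of the class of `(a,b)`:
the componentwise `m`-ary product of `m-1` copies of `(a,b)` with it, namely
`(μ(a^{m-1}, μ(b^{m-1},a)), μ(b^{m-1}, μ(a^{m-1},b)))`, is twisted-equivalent
to `(a,b)`. -/
theorem mary_querelement {S : Type*} (m : ℕ) (hm : 2 ≤ m)
    (μ : (Fin m → S) → S) (hassoc : TotAssoc m μ) (hcomm : CommOp m μ) (a b : S) :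
    ∃ z : S,
      twist m μ (μ (repv m a (μ (repv m b a)))) b z =
        twist m μ a (μ (repv m b (μ (repv m a b)))) z := by
  refine ⟨a, ?_⟩
  show Lop m μ (Lop m μ a (Lop m μ b a)) (Lop m μ b a) =
       Lop m μ a (Lop m μ (Lop m μ b (Lop m μ a b)) a)
  rw [P2 hm hassoc hcomm a (Lop m μ b a) (Lop m μ b a)]
  rw [P2 hm hassoc hcomm b a ((Lop m μ a)^[m-1] (Lop m μ b a))]
  rw [P2 hm hassoc hcomm b (Lop m μ a b) a]
  rw [P2 hm hassoc hcomm a b ((Lop m μ b)^[m-1] a)]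
  refine congrArg (Lop m μ a) ?_
  have hC : Function.Commute (Lop m μ a) (Lop m μ b) := fun x => P1 hm hassoc hcomm a b x
  have h1 : (Lop m μ a)^[m-1] (Lop m μ b a) = Lop m μ b ((Lop m μ a)^[m-1] a) :=
    (hC.iterate_left (m-1)) a
  have h2 : (Lop m μ a)^[m-1] ((Lop m μ b)^[m-1] a) =
      (Lop m μ b)^[m-1] ((Lop m μ a)^[m-1] a) :=
    ((hC.iterate_left (m-1)).iterate_right (m-1)) a
  rw [h1, h2, ← Function.iterate_succ_apply]
  exact Function.iterate_succ_apply' _ _ _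
end

section
/- Let S be the set of 2×2 complex matrices of the form [[u,0],[0,0]] with the 4-ary operation μ(a₁,a₂,a₃,a₄) = a₁ + ε a₂ + ε² a₃ + a₄ where ε = e^{2πi/3}. Then μ is totally associative, S is idempotent in the sense μ(a,a,a,a) = a, and moreover μ(a,a,a,b) = b for all a,b ∈ S; consequently the twisted equivalence relation on S × S identifies all pairs, so the 4-ary completion group is trivial. -/
open Matrix Complex

/-- A primitive cube root of unity. -/
noncomputable def ε : ℂ := Complex.exp (2 * Real.pi * Complex.I / 3)

/-- The set of matrices of the form `[[u,0],[0,0]]`, `u ∈ ℂ`. -/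
def Sm : Set (Matrix (Fin 2) (Fin 2) ℂ) :=
  {A | ∃ u : ℂ, A = Matrix.of ![![u, 0], ![0, 0]]}

/-- The 4-ary operation `μ(a₁,a₂,a₃,a₄) = a₁ + ε·a₂ + ε²·a₃ + a₄`. -/
noncomputable def μ4 (a b c d : Matrix (Fin 2) (Fin 2) ℂ) :
    Matrix (Fin 2) (Fin 2) ℂ :=
  a + ε • b + ε ^ 2 • c + d

lemma ε_prim : IsPrimitiveRoot ε 3 := by
  have := Complex.isPrimitiveRoot_exp 3 (by norm_num)
  simpa [ε] using this

lemma ε_cube : ε ^ 3 = 1 := ε_prim.pow_eq_one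

lemma ε_sum : 1 + ε + ε ^ 2 = 0 := by
  have hne : ε ≠ 1 := by
    intro h
    have := ε_prim.pow_ne_one_of_pos_of_lt (l := 1) one_ne_zero (by norm_num)
    simp [h] at this
  have h : (ε - 1) * (1 + ε + ε ^ 2) = 0 := by
    have : ε ^ 3 - 1 = 0 := by rw [ε_cube]; ring
    linear_combination this
  rcases mul_eq_zero.mp h with h1 | h2
  · exact absurd (sub_eq_zero.mp h1) hne
  · exact h2

/-- The 4-ary matrix operation `μ(a₁,a₂,a₃,a₄) = a₁ + εa₂ + ε²a₃ + a₄` preserves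
`Sm`, is totally associative, is idempotent (`μ(a,a,a,a) = a`), satisfies
`μ(a,a,a,b) = b`, and hence the twisted relation identifies all pairs, so the
4-ary completion group is trivial. -/
theorem matrix_4ary_trivial_K0 :
    (∀ a ∈ Sm, ∀ b ∈ Sm, ∀ c ∈ Sm, ∀ d ∈ Sm, μ4 a b c d ∈ Sm) ∧
    (∀ x1 x2 x3 x4 x5 x6 x7 : Matrix (Fin 2) (Fin 2) ℂ,
      μ4 (μ4 x1 x2 x3 x4) x5 x6 x7 = μ4 x1 (μ4 x2 x3 x4 x5) x6 x7 ∧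
      μ4 x1 (μ4 x2 x3 x4 x5) x6 x7 = μ4 x1 x2 (μ4 x3 x4 x5 x6) x7 ∧
      μ4 x1 x2 (μ4 x3 x4 x5 x6) x7 = μ4 x1 x2 x3 (μ4 x4 x5 x6 x7)) ∧
    (∀ a ∈ Sm, μ4 a a a a = a) ∧
    (∀ a ∈ Sm, ∀ b ∈ Sm, μ4 a a a b = b) ∧
    (∀ a₁ ∈ Sm, ∀ b₁ ∈ Sm, ∀ a₂ ∈ Sm, ∀ b₂ ∈ Sm, ∃ z ∈ Sm,
      μ4 (μ4 a₁ a₁ a₁ b₂) b₂ b₂ z = μ4 (μ4 a₂ a₂ a₂ b₁) b₁ b₁ z) := by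
  have haaab : ∀ a b : Matrix (Fin 2) (Fin 2) ℂ, μ4 a a a b = b := by
    intro a b
    have h : (1 : ℂ) • a + ε • a + ε ^ 2 • a = (1 + ε + ε ^ 2) • a := by
      rw [add_smul, add_smul]
    simp only [μ4]
    rw [show a + ε • a + ε ^ 2 • a + b = ((1 : ℂ) • a + ε • a + ε ^ 2 • a) + b by
      simp, h, ε_sum, zero_smul, zero_add]
  refine ⟨?_, ?_, ?_, ?_, ?_⟩
  · rintro a ⟨u, rfl⟩ b ⟨v, rfl⟩ c ⟨w, rfl⟩ d ⟨x, rfl⟩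
    refine ⟨u + ε * v + ε ^ 2 * w + x, ?_⟩
    simp only [μ4]
    ext i j
    fin_cases i <;> fin_cases j <;>
      simp [Matrix.add_apply, Matrix.smul_apply, smul_eq_mul]
  · intro x1 x2 x3 x4 x5 x6 x7
    have hc : ε ^ 3 = 1 := ε_cube
    refine ⟨?_, ?_, ?_⟩ <;>
    · simp only [μ4, smul_add, smul_smul,
        show ε * ε = ε ^ 2 by ring,
        show ε * ε ^ 2 = 1 by rw [← pow_succ']; exact hc,
        show ε ^ 2 * ε = 1 by rw [← pow_succ]; exact hc,
        show ε ^ 2 * ε ^ 2 = ε by rw [← pow_add]; rw [show (2+2:ℕ)=3+1 by rfl, pow_succ, hc, one_mul],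
        one_smul]
      abel
  · intro a _
    rw [haaab a a]
  · intro a _ b _
    exact haaab a b
  · rintro a₁ _ b₁ hb₁ a₂ _ b₂ hb₂
    refine ⟨0, ⟨0, by ext i j; fin_cases i <;> fin_cases j <;> simp⟩, ?_⟩
    rw [haaab a₁ b₂, haaab a₂ b₁, haaab b₂ 0, haaab b₁ 0]
end
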